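/- Let H be a separable analytic reproducing kernel Hilbert space of E-valued functions on 𝔻, with E ≠ {0}, on which the multiplication operator M_z is bounded, and suppose the kernel is quasi-scalar: there exist complex numbers a_{m,n} (m, n ∈ ℕ) such that ⟨K_{m,ζ}, K_{n,η}⟩_H = a_{m,n}·⟨ζ, η⟩_E for all ζ, η ∈ E. Then: (1) if liminf_n a_{n,n}/(n!)² = 0, M_z* is hypercyclic on H; (2) if lim_n a_{n,n}/(n!)² = 0, M_z* is topologically mixing on H. -/

import Mathlib

open Metric Filter ContinuousLinearMap

def stmt9Asc : ℕ → ℕ → ℕ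
  | 0, _ => 1
  | (j+1), r => (r + j + 1) * stmt9Asc j r

lemma stmt9Asc_pos (j r : ℕ) : 0 < stmt9Asc j r := by
  induction j with
  | zero => simp [stmt9Asc]
  | succ j ih => exact Nat.mul_pos (Nat.succ_pos _) ih

lemma stmt9Asc_mul_factorial (j r : ℕ) :
    stmt9Asc j r * r.factorial = (r + j).factorial := by
  induction j with
  | zero => simp [stmt9Asc]
  | succ j ih =>
    show (r + j + 1) * stmt9Asc j r * r.factorial = (r + (j+1)).factorial
    rw [mul_assoc, ih, show r + (j + 1) = (r + j) + 1 from rfl, Nat.factorial_succ]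

lemma stmt9_leibniz {E : Type*} [NormedAddCommGroup E] [NormedSpace ℂ E]
    {s : Set ℂ} (hs : IsOpen s) {g : ℂ → E}
    (hg : ∀ m : ℕ, DifferentiableOn ℂ (iteratedDerivWithin m g s) s) (n : ℕ) :
    ∀ z ∈ s, iteratedDerivWithin (n+1) (fun w => w • g w) s z
      = ((n : ℂ)+1) • iteratedDerivWithin n g s z + z • iteratedDerivWithin (n+1) g s z := by
  have hu : UniqueDiffOn ℂ s := hs.uniqueDiffOn
  have key : ∀ (m : ℕ) (z : ℂ), z ∈ s → HasDerivWithinAt (iteratedDerivWithin m g s)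
      (iteratedDerivWithin (m+1) g s z) s z := by
    intro m z hz
    rw [iteratedDerivWithin_succ]
    exact (hg m z hz).hasDerivWithinAt
  induction n with
  | zero =>
    intro z hz
    have hgz : HasDerivWithinAt g (iteratedDerivWithin 1 g s z) s z := by
      have := key 0 z hz
      rwa [iteratedDerivWithin_zero] at this
    have h1 : HasDerivWithinAt (fun w : ℂ => w • g w)
        (z • iteratedDerivWithin 1 g s z + (1 : ℂ) • g z) s z :=
      (hasDerivWithinAt_id z s).smul hgz
    rw [iteratedDerivWithin_succ, iteratedDerivWithin_zero,
      h1.derivWithin (hu z hz)]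
    norm_num
    module
  | succ n IH =>
    intro z hz
    have hEq : Set.EqOn (iteratedDerivWithin (n+1) (fun w => w • g w) s)
        (fun w => ((n:ℂ)+1) • iteratedDerivWithin n g s w
          + w • iteratedDerivWithin (n+1) g s w) s := fun w hw => IH w hw
    have h2 : HasDerivWithinAt
        (fun w => ((n:ℂ)+1) • iteratedDerivWithin n g s w
          + w • iteratedDerivWithin (n+1) g s w)
        (((n:ℂ)+1) • iteratedDerivWithin (n+1) g s z +
          (z • iteratedDerivWithin (n+1+1) g s z
            + (1:ℂ) • iteratedDerivWithin (n+1) g s z)) s z :=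
      ((key n z hz).const_smul _).add ((hasDerivWithinAt_id z s).smul (key (n+1) z hz))
    rw [iteratedDerivWithin_succ, derivWithin_congr hEq (IH z hz),
      h2.derivWithin (hu z hz)]
    push_cast
    module

lemma stmt9_eqOn_zero {E : Type*} [NormedAddCommGroup E] [NormedSpace ℂ E]
    [CompleteSpace E] {g : ℂ → E} (hg : DifferentiableOn ℂ g (ball (0:ℂ) 1))
    (h0 : ∀ n : ℕ, iteratedDerivWithin n g (ball (0:ℂ) 1) 0 = 0) :
    Set.EqOn g 0 (ball (0:ℂ) 1) := by
  have hs : IsOpen (ball (0:ℂ) 1) := isOpen_ball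
  have h0m : (0:ℂ) ∈ ball (0:ℂ) 1 := mem_ball_self one_pos
  have hA : AnalyticOnNhd ℂ g (ball (0:ℂ) 1) := hg.analyticOnNhd hs
  have hconv : ∀ n : ℕ, iteratedDeriv n g 0 = 0 := by
    intro n
    rw [← h0 n, iteratedDerivWithin_eq_iteratedFDerivWithin, iteratedDeriv_eq_iteratedFDeriv,
      iteratedFDerivWithin_of_isOpen n hs h0m]
  obtain ⟨p, hp⟩ := hA 0 h0m
  obtain ⟨r, hr⟩ := hp
  have hev : g =ᶠ[nhds (0:ℂ)] 0 := by
    filter_upwards [EMetric.ball_mem_nhds (0:ℂ) hr.r_pos] with y hy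
    have hsum := hr.hasSum_iteratedFDeriv hy
    have hz : ∀ n : ℕ, ((n.factorial : ℂ))⁻¹ • iteratedFDeriv ℂ n g 0 (fun _ => y) = 0 := by
      intro n
      rw [iteratedFDeriv_apply_eq_iteratedDeriv_mul_prod, hconv, smul_zero, smul_zero]
    rw [funext hz] at hsum
    have := hsum.unique hasSum_zero
    simpa using this
  exact hA.eqOn_zero_of_preconnected_of_eventuallyEq_zero
    (convex_ball (0:ℂ) 1).isPreconnected h0m hev

theorem stmt9 {H E : Type*}
    [NormedAddCommGroup H] [InnerProductSpace ℂ H] [CompleteSpace H]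
    [TopologicalSpace.SeparableSpace H]
    [NormedAddCommGroup E] [InnerProductSpace ℂ E] [CompleteSpace E] [Nontrivial E]
    (ι : H →ₗ[ℂ] (ℂ → E))
    (hinj : ∀ f g : H, Set.EqOn (ι f) (ι g) (ball (0 : ℂ) 1) → f = g)
    (hanal : ∀ f : H, DifferentiableOn ℂ (ι f) (ball (0 : ℂ) 1))
    (heval : ∀ w ∈ ball (0 : ℂ) 1, Continuous fun f : H => ι f w)
    (Mz : H →L[ℂ] H)
    (hMz : ∀ f : H, ∀ w ∈ ball (0 : ℂ) 1, ι (Mz f) w = w • ι f w)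
    (K : ℕ → E → H)
    (hK : ∀ (n : ℕ) (η : E) (f : H),
      (inner ℂ f (K n η) : ℂ) =
        (inner ℂ (iteratedDerivWithin n (ι f) (ball (0 : ℂ) 1) 0) η : ℂ))
    (a : ℕ → ℕ → ℂ)
    (ha : ∀ (m n : ℕ) (ζ η : E),
      (inner ℂ (K m ζ) (K n η) : ℂ) = a m n * (inner ℂ ζ η : ℂ)) :
    (liminf (fun n : ℕ => (((a n n).re / (n.factorial : ℝ) ^ 2 : ℝ) : EReal)) atTop = 0 →
      ∃ g : H, Dense (Set.range fun m : ℕ => ((adjoint Mz) ^ m) g)) ∧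
    (Tendsto (fun n : ℕ => (a n n).re / (n.factorial : ℝ) ^ 2) atTop (nhds 0) →
      ∀ U V : Set H, IsOpen U → IsOpen V → U.Nonempty → V.Nonempty →
        ∃ N : ℕ, ∀ j ≥ N, ((((adjoint Mz) ^ j) ⁻¹' U) ∩ V).Nonempty) := by
  set T : H →L[ℂ] H := adjoint Mz with hT
  set b : ℕ → ℝ := fun n => (a n n).re / (n.factorial : ℝ) ^ 2 with hbdef
  have hb' : ∀ n : ℕ, (a n n).re / (n.factorial : ℝ) ^ 2 = b n := fun n => rfl
  have h0m : (0:ℂ) ∈ ball (0:ℂ) 1 := mem_ball_self one_pos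
  obtain ⟨η₀, hη₀⟩ := exists_ne (0 : E)
  have hηpos : 0 < ‖η₀‖ := norm_pos_iff.mpr hη₀
  -- smoothness of ι f
  have hsmooth : ∀ f : H, ∀ m : ℕ,
      DifferentiableOn ℂ (iteratedDerivWithin m (ι f) (ball (0:ℂ) 1)) (ball (0:ℂ) 1) := by
    intro f m
    have hA : AnalyticOnNhd ℂ (ι f) (ball (0:ℂ) 1) := (hanal f).analyticOnNhd isOpen_ball
    have hC : ContDiffOn ℂ ((m:ℕ∞)+1) (ι f) (ball (0:ℂ) 1) :=
      hA.contDiffOn isOpen_ball.uniqueDiffOn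
    exact hC.differentiableOn_iteratedDerivWithin (by exact_mod_cast Nat.lt_succ_self m)
      isOpen_ball.uniqueDiffOn
  -- action of T on kernel vectors
  have hderiv_smul : ∀ (f : H) (n : ℕ),
      iteratedDerivWithin (n+1) (ι (Mz f)) (ball (0:ℂ) 1) 0
        = ((n+1 : ℕ) : ℂ) • iteratedDerivWithin n (ι f) (ball (0:ℂ) 1) 0 := by
    intro f n
    have hEq : Set.EqOn (ι (Mz f)) (fun w => w • ι f w) (ball (0:ℂ) 1) :=
      fun w hw => hMz f w hw
    have h1 : iteratedDerivWithin (n+1) (ι (Mz f)) (ball (0:ℂ) 1) 0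
        = iteratedDerivWithin (n+1) (fun w => w • ι f w) (ball (0:ℂ) 1) 0 :=
      iteratedDerivWithin_congr hEq h0m
    rw [h1, stmt9_leibniz isOpen_ball (hsmooth f) n 0 h0m]
    push_cast
    simp
  have hTK : ∀ (n : ℕ) (η : E), T (K (n+1) η) = ((n+1 : ℕ) : ℂ) • K n η := by
    intro n η
    apply ext_inner_left ℂ
    intro f
    rw [hT, adjoint_inner_right, hK (n+1) η (Mz f), inner_smul_right, hK n η f,
      hderiv_smul f n, inner_smul_left]
    simp
  have hTK0 : ∀ η : E, T (K 0 η) = 0 := by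
    intro η
    apply ext_inner_left ℂ
    intro f
    rw [hT, adjoint_inner_right, hK 0 η (Mz f), inner_zero_right,
      iteratedDerivWithin_zero, hMz f 0 h0m, zero_smul, inner_zero_left]
  -- norms of kernel vectors
  have hsq : ∀ (n : ℕ) (η : E), ‖K n η‖^2 = (a n n).re * ‖η‖^2 := by
    intro n η
    have h := ha n n η η
    rw [inner_self_eq_norm_sq_to_K, inner_self_eq_norm_sq_to_K] at h
    have h2 := congrArg Complex.re h
    simpa [Complex.mul_re, ← Complex.ofReal_pow] using h2
  have cnn : ∀ n : ℕ, 0 ≤ (a n n).re := by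
    intro n
    nlinarith [hsq n η₀, sq_nonneg ‖K n η₀‖, pow_pos hηpos 2]
  have bnn : ∀ n : ℕ, 0 ≤ b n := by
    intro n
    rw [← hb' n]
    exact div_nonneg (cnn n) (by positivity)
  have hKnorm : ∀ (n : ℕ) (η : E), ‖K n η‖ = Real.sqrt ((a n n).re) * ‖η‖ := by
    intro n η
    rw [← Real.sqrt_sq (norm_nonneg (K n η)), hsq n η, Real.sqrt_mul (cnn n),
      Real.sqrt_sq (norm_nonneg η)]
  -- growth inequality
  have hgrow : ∀ n : ℕ, b n ≤ ‖T‖^2 * b (n+1) := by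
    intro n
    have hop := T.le_opNorm (K (n+1) η₀)
    rw [hTK n η₀, norm_smul, hKnorm n η₀, hKnorm (n+1) η₀] at hop
    simp only [Complex.norm_natCast] at hop
    push_cast at hop
    have h2 : ((n:ℝ)+1) * Real.sqrt ((a n n).re) ≤ ‖T‖ * Real.sqrt ((a (n+1) (n+1)).re) := by
      nlinarith [hop, hηpos, Real.sqrt_nonneg ((a n n).re), Real.sqrt_nonneg ((a (n+1) (n+1)).re),
        norm_nonneg T]
    have h3 := mul_self_le_mul_self (by positivity) h2
    have key : ((n:ℝ)+1)^2 * (a n n).re ≤ ‖T‖^2 * (a (n+1) (n+1)).re := by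
      nlinarith [h3, Real.sq_sqrt (cnn n), Real.sq_sqrt (cnn (n+1))]
    rw [← hb' n, ← hb' (n+1)]
    have hfact : ((n+1).factorial : ℝ) = ((n:ℝ)+1) * (n.factorial:ℝ) := by
      push_cast [Nat.factorial_succ]; ring
    have hp2 : (0:ℝ) < (n.factorial:ℝ)^2 := by positivity
    have hq2 : (0:ℝ) < ((n:ℝ)+1)^2 := by positivity
    rw [hfact]
    rw [div_le_iff₀ hp2]
    have hexp : ‖T‖ ^ 2 * ((a (n+1) (n+1)).re / (((n:ℝ)+1) * (n.factorial:ℝ)) ^ 2)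
        * (n.factorial:ℝ)^2 = ‖T‖^2 * (a (n+1) (n+1)).re / ((n:ℝ)+1)^2 := by
      field_simp
    rw [hexp, le_div_iff₀ hq2]
    nlinarith [key]
  -- window inequality
  set e : ℝ := max ‖T‖ 1 with he
  have he0 : (0:ℝ) ≤ e := le_trans zero_le_one (le_max_right _ _)
  have hTe : ‖T‖ ≤ e := le_max_left _ _
  have hwin : ∀ (d n : ℕ), b n ≤ e^(2*d) * b (n+d) := by
    intro d
    induction d with
    | zero => intro n; simp
    | succ d IH =>
      intro n
      show b n ≤ e^(2*(d+1)) * b (n+d+1)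
      calc b n ≤ e^(2*d) * b (n+d) := IH n
        _ ≤ e^(2*d) * (e^2 * b (n+d+1)) := by
            apply mul_le_mul_of_nonneg_left _ (pow_nonneg he0 _)
            calc b (n+d) ≤ ‖T‖^2 * b (n+d+1) := hgrow _
              _ ≤ e^2 * b (n+d+1) :=
                mul_le_mul_of_nonneg_right (pow_le_pow_left₀ (norm_nonneg T) hTe 2) (bnn _)
        _ = e^(2*(d+1)) * b (n+d+1) := by ring
  -- iterated action of T on kernel vectors
  have hTpow : ∀ (j r : ℕ) (η : E), (T ^ j) (K (r + j) η) = ((stmt9Asc j r : ℕ) : ℂ) • K r η := by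
    intro j
    induction j with
    | zero => intro r η; simp [stmt9Asc]
    | succ j IH =>
      intro r η
      rw [show r + (j+1) = (r+j)+1 from rfl, pow_succ, ContinuousLinearMap.mul_apply,
        hTK (r+j) η, map_smul, IH r η, smul_smul, ← Nat.cast_mul]
      rfl
  -- nilpotency on kernel vectors
  have hnil : ∀ (r : ℕ) (η : E), (T ^ (r+1)) (K r η) = 0 := by
    intro r
    induction r with
    | zero => intro η; rw [pow_one, hTK0]
    | succ r IH =>
      intro η
      rw [pow_succ, ContinuousLinearMap.mul_apply, hTK r η, map_smul, IH η, smul_zero]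
  -- the span of kernel vectors is dense
  set Sp : Submodule ℂ H := Submodule.span ℂ (Set.range fun p : ℕ × E => K p.1 p.2) with hSp
  have hdense : Dense (Sp : Set H) := by
    rw [Submodule.dense_iff_topologicalClosure_eq_top, Submodule.topologicalClosure_eq_top_iff,
      Submodule.eq_bot_iff]
    intro f hf
    have hperp : ∀ (n : ℕ) (η : E), (inner ℂ (K n η) f : ℂ) = 0 := fun n η =>
      (Submodule.mem_orthogonal _ f).mp hf (K n η) (Submodule.subset_span ⟨(n, η), rfl⟩)
    have hd0 : ∀ n : ℕ, iteratedDerivWithin n (ι f) (ball (0:ℂ) 1) 0 = 0 := by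
      intro n
      have h2 : ∀ η : E, (inner ℂ (iteratedDerivWithin n (ι f) (ball (0:ℂ) 1) 0) η : ℂ) = 0 :=
        fun η => by rw [← hK n η f]; exact inner_eq_zero_symm.mp (hperp n η)
      exact inner_self_eq_zero.mp (h2 _)
    have hzero := stmt9_eqOn_zero (hanal f) hd0
    apply hinj f 0
    intro w hw
    rw [map_zero]
    exact hzero hw
  -- quantitative right inverses on the span
  have hP : ∀ z ∈ Sp, ∃ (D : ℕ) (Kc : ℝ), 0 ≤ Kc ∧
      ∀ n : ℕ, ∃ w : H, (T ^ n) w = z ∧ ‖w‖ ≤ Kc * Real.sqrt (b (n + D)) := by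
    intro z hz
    induction hz using Submodule.span_induction with
    | mem x h =>
      obtain ⟨⟨r, η⟩, rfl⟩ := h
      refine ⟨r, (r.factorial : ℝ) * ‖η‖, by positivity, fun n => ?_⟩
      have hascne : ((stmt9Asc n r : ℕ) : ℂ) ≠ 0 :=
        Nat.cast_ne_zero.mpr (stmt9Asc_pos n r).ne'
      refine ⟨((stmt9Asc n r : ℕ) : ℂ)⁻¹ • K (r + n) η, ?_, ?_⟩
      · rw [map_smul, hTpow n r η, smul_smul, inv_mul_cancel₀ hascne, one_smul]
      · have hasc : (stmt9Asc n r : ℝ) * (r.factorial : ℝ) = ((r+n).factorial : ℝ) := by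
          exact_mod_cast stmt9Asc_mul_factorial n r
        have hascpos : (0:ℝ) < (stmt9Asc n r : ℝ) := by exact_mod_cast stmt9Asc_pos n r
        have hfpos : (0:ℝ) < ((r+n).factorial : ℝ) := by positivity
        have e1 : Real.sqrt (b (n + r)) = Real.sqrt ((a (r+n) (r+n)).re) / ((r+n).factorial : ℝ) := by
          rw [show n + r = r + n from add_comm n r, ← hb' (r+n),
            show (a (r+n) (r+n)).re / ((r+n).factorial : ℝ)^2
              = (Real.sqrt ((a (r+n) (r+n)).re) / ((r+n).factorial:ℝ))^2 by
                rw [div_pow, Real.sq_sqrt (cnn _)],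
            Real.sqrt_sq (by positivity)]
        rw [norm_smul, hKnorm (r+n) η, e1]
        have e2 : ‖((stmt9Asc n r : ℕ) : ℂ)⁻¹‖ = ((stmt9Asc n r : ℝ))⁻¹ := by
          rw [norm_inv, Complex.norm_natCast]
        have e3 : ((stmt9Asc n r : ℝ))⁻¹ = (r.factorial : ℝ) / ((r+n).factorial : ℝ) := by
          rw [eq_div_iff hfpos.ne', ← hasc, ← mul_assoc, inv_mul_cancel₀ hascpos.ne', one_mul]
        rw [e2, e3]
        apply le_of_eq
        ring
    | zero =>
      exact ⟨0, 0, le_refl 0, fun n => ⟨0, map_zero _, by simp⟩⟩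
    | add x y hx hy Px Py =>
      obtain ⟨D₁, K₁, hK₁, h₁⟩ := Px
      obtain ⟨D₂, K₂, hK₂, h₂⟩ := Py
      refine ⟨max D₁ D₂, K₁ * e^(max D₁ D₂ - D₁) + K₂ * e^(max D₁ D₂ - D₂), by positivity,
        fun n => ?_⟩
      obtain ⟨w₁, hw₁, hn₁⟩ := h₁ n
      obtain ⟨w₂, hw₂, hn₂⟩ := h₂ n
      have hboost : ∀ (Dk : ℕ), Dk ≤ max D₁ D₂ →
          Real.sqrt (b (n + Dk)) ≤ e^(max D₁ D₂ - Dk) * Real.sqrt (b (n + max D₁ D₂)) := by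
        intro Dk hDk
        have hw := hwin (max D₁ D₂ - Dk) (n + Dk)
        rw [show n + Dk + (max D₁ D₂ - Dk) = n + max D₁ D₂ by omega] at hw
        have := Real.sqrt_le_sqrt hw
        rwa [Real.sqrt_mul (by positivity),
          show Real.sqrt (e^(2*(max D₁ D₂ - Dk))) = e^(max D₁ D₂ - Dk) by
            rw [show (2*(max D₁ D₂ - Dk)) = (max D₁ D₂ - Dk)*2 by ring, pow_mul,
              Real.sqrt_sq (by positivity)]] at this
      refine ⟨w₁ + w₂, by rw [map_add, hw₁, hw₂], ?_⟩
      calc ‖w₁ + w₂‖ ≤ ‖w₁‖ + ‖w₂‖ := norm_add_le _ _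
        _ ≤ K₁ * Real.sqrt (b (n + D₁)) + K₂ * Real.sqrt (b (n + D₂)) := add_le_add hn₁ hn₂
        _ ≤ K₁ * (e^(max D₁ D₂ - D₁) * Real.sqrt (b (n + max D₁ D₂)))
            + K₂ * (e^(max D₁ D₂ - D₂) * Real.sqrt (b (n + max D₁ D₂))) :=
          add_le_add (mul_le_mul_of_nonneg_left (hboost D₁ (le_max_left _ _)) hK₁)
            (mul_le_mul_of_nonneg_left (hboost D₂ (le_max_right _ _)) hK₂)
        _ = (K₁ * e^(max D₁ D₂ - D₁) + K₂ * e^(max D₁ D₂ - D₂))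
            * Real.sqrt (b (n + max D₁ D₂)) := by ring
    | smul c x hx Px =>
      obtain ⟨D₁, K₁, hK₁, h₁⟩ := Px
      refine ⟨D₁, ‖c‖ * K₁, by positivity, fun n => ?_⟩
      obtain ⟨w₁, hw₁, hn₁⟩ := h₁ n
      refine ⟨c • w₁, by rw [map_smul, hw₁], ?_⟩
      rw [norm_smul, mul_assoc]
      exact mul_le_mul_of_nonneg_left hn₁ (norm_nonneg c)
  -- eventual annihilation on the span
  have hQ : ∀ z ∈ Sp, ∃ N : ℕ, ∀ j, N ≤ j → (T ^ j) z = 0 := by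
    intro z hz
    induction hz using Submodule.span_induction with
    | mem x h =>
      obtain ⟨⟨r, η⟩, rfl⟩ := h
      refine ⟨r+1, fun j hj => ?_⟩
      obtain ⟨k, rfl⟩ := Nat.exists_eq_add_of_le hj
      rw [show r + 1 + k = k + (r + 1) from add_comm _ _, pow_add,
        ContinuousLinearMap.mul_apply, hnil r η, map_zero]
    | zero => exact ⟨0, fun j _ => map_zero _⟩
    | add x y hx hy Px Py =>
      obtain ⟨N₁, h₁⟩ := Px
      obtain ⟨N₂, h₂⟩ := Py
      exact ⟨max N₁ N₂, fun j hj => by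
        rw [map_add, h₁ j (le_trans (le_max_left _ _) hj),
          h₂ j (le_trans (le_max_right _ _) hj), add_zero]⟩
    | smul c x hx Px =>
      obtain ⟨N₁, h₁⟩ := Px
      exact ⟨N₁, fun j hj => by rw [map_smul, h₁ j hj, smul_zero]⟩
  -- the core transitivity mechanism
  have core : ∀ U V : Set H, IsOpen U → IsOpen V → U.Nonempty → V.Nonempty →
      ∃ (N₀ D : ℕ) (Kc ε : ℝ), 0 < ε ∧ 0 ≤ Kc ∧
        ∀ j, N₀ ≤ j → Kc * Real.sqrt (b (j + D)) < ε / 2 →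
          (((T ^ j) ⁻¹' U) ∩ V).Nonempty := by
    rintro U V hU hV ⟨u, hu⟩ ⟨v, hv⟩
    obtain ⟨ε₁, hε₁, hball₁⟩ := Metric.isOpen_iff.mp hU u hu
    obtain ⟨ε₂, hε₂, hball₂⟩ := Metric.isOpen_iff.mp hV v hv
    have hεpos : 0 < min ε₁ ε₂ := lt_min hε₁ hε₂
    obtain ⟨zu, hzuSp, hzu⟩ := hdense.exists_dist_lt u (by positivity : 0 < min ε₁ ε₂ / 2)
    obtain ⟨zv, hzvSp, hzv⟩ := hdense.exists_dist_lt v (by positivity : 0 < min ε₁ ε₂ / 2)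
    obtain ⟨D, Kc, hKc, hPw⟩ := hP zu hzuSp
    obtain ⟨N₀, hN₀⟩ := hQ zv hzvSp
    refine ⟨N₀, D, Kc, min ε₁ ε₂, hεpos, hKc, fun j hj hsmall => ?_⟩
    obtain ⟨w, hw1, hw2⟩ := hPw j
    refine ⟨zv + w, ?_, ?_⟩
    · have hTx : (T ^ j) (zv + w) = zu := by
        rw [map_add, hN₀ j hj, hw1, zero_add]
      show (T ^ j) (zv + w) ∈ U
      rw [hTx]
      apply hball₁
      rw [mem_ball, dist_comm]
      calc dist u zu < min ε₁ ε₂ / 2 := hzu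
        _ < ε₁ := by
            have : min ε₁ ε₂ ≤ ε₁ := min_le_left _ _
            linarith
    · apply hball₂
      rw [mem_ball]
      have hd1 : dist (zv + w) zv = ‖w‖ := by simp [dist_eq_norm]
      calc dist (zv + w) v ≤ dist (zv + w) zv + dist zv v := dist_triangle _ _ _
        _ < min ε₁ ε₂ / 2 + min ε₁ ε₂ / 2 := by
            rw [hd1, dist_comm]
            exact add_lt_add_of_le_of_lt (le_trans hw2 hsmall.le) hzv
        _ ≤ ε₂ := by
            have : min ε₁ ε₂ ≤ ε₂ := min_le_right _ _
            linarith
  constructor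
  · -- part 1: hypercyclicity from the liminf condition
    intro hliminf
    simp only [hb'] at hliminf
    have hfreq : ∀ δ : ℝ, 0 < δ → ∃ᶠ n in atTop, b n < δ := by
      intro δ hδ
      have hlt : liminf (fun n : ℕ => ((b n : ℝ) : EReal)) atTop < (δ : EReal) := by
        rw [hliminf]
        exact_mod_cast hδ
      have h2 := frequently_lt_of_liminf_lt (h := hlt)
      exact h2.mono fun n hn => by exact_mod_cast hn
    haveI : SecondCountableTopology H :=
      UniformSpace.secondCountable_of_separable H
    obtain ⟨B, hBc, hBne, hBb⟩ := TopologicalSpace.exists_countable_basis H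
    have hfind : ∀ U' V' : Set H, IsOpen U' → IsOpen V' → U'.Nonempty → V'.Nonempty →
        ∃ j : ℕ, (((T ^ j) ⁻¹' U') ∩ V').Nonempty := by
      intro U' V' hU' hV' hU'ne hV'ne
      obtain ⟨N₀, D, Kc, ε, hε, hKc, hcore⟩ := core U' V' hU' hV' hU'ne hV'ne
      have hδ : 0 < (ε / (2 * (Kc + 1)))^2 := by positivity
      obtain ⟨n, hn1, hn2⟩ := ((hfreq _ hδ).and_eventually (eventually_ge_atTop (N₀ + D))).exists
      refine ⟨n - D, hcore (n - D) (by omega) ?_⟩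
      rw [show n - D + D = n by omega]
      have hsqrt : Real.sqrt (b n) < ε / (2 * (Kc + 1)) := by
        have := Real.sqrt_lt_sqrt (bnn n) hn1
        rwa [Real.sqrt_sq (by positivity)] at this
      calc Kc * Real.sqrt (b n) ≤ Kc * (ε / (2 * (Kc + 1))) :=
            mul_le_mul_of_nonneg_left hsqrt.le hKc
        _ < ε / 2 := by
            rw [show Kc * (ε / (2 * (Kc + 1))) = (Kc * ε) / (2 * (Kc + 1)) by ring,
              div_lt_div_iff₀ (by positivity) (by norm_num)]
            nlinarith
    have hGdense : ∀ Ub ∈ B, Dense (⋃ n : ℕ, (T ^ n) ⁻¹' Ub) := by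
      intro Ub hUb
      rw [dense_iff_inter_open]
      intro V' hV' hV'ne
      have hUbne : Ub.Nonempty := Set.nonempty_iff_ne_empty.mpr (fun h => hBne (h ▸ hUb))
      obtain ⟨j, x, hx1, hx2⟩ := hfind Ub V' (hBb.isOpen hUb) hV' hUbne hV'ne
      exact ⟨x, hx2, Set.mem_iUnion.mpr ⟨j, hx1⟩⟩
    have hdenseG : Dense (⋂ Ub ∈ B, ⋃ n : ℕ, (T ^ n) ⁻¹' Ub) :=
      dense_biInter_of_isOpen
        (fun Ub hUb => isOpen_iUnion fun n => (hBb.isOpen hUb).preimage (T ^ n).continuous)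
        hBc hGdense
    obtain ⟨g, hg⟩ := hdenseG.nonempty
    refine ⟨g, ?_⟩
    rw [dense_iff_inter_open]
    intro W hW hWne
    obtain ⟨x, hx⟩ := hWne
    obtain ⟨Ub, hUbB, hxUb, hUbW⟩ := hBb.exists_subset_of_mem_open hx hW
    obtain ⟨m, hm⟩ := Set.mem_iUnion.mp (Set.mem_iInter₂.mp hg Ub hUbB)
    exact ⟨(T ^ m) g, hUbW hm, ⟨m, rfl⟩⟩
  · -- part 2: topological mixing from the limit condition
    intro h2 U V hU hV hUne hVne
    obtain ⟨N₀, D, Kc, ε, hε, hKc, hcore⟩ := core U V hU hV hUne hVne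
    have h3 : Tendsto (fun j : ℕ => b (j + D)) atTop (nhds 0) :=
      h2.comp (tendsto_add_atTop_nat D)
    have h5 : Tendsto (fun j : ℕ => Real.sqrt (b (j + D))) atTop (nhds 0) := by
      have := (Real.continuous_sqrt.continuousAt (x := (0:ℝ))).tendsto.comp h3
      simpa [Function.comp_def] using this
    have ht : Tendsto (fun j : ℕ => Kc * Real.sqrt (b (j + D))) atTop (nhds 0) := by
      simpa using h5.const_mul Kc
    have hev : ∀ᶠ j in atTop, Kc * Real.sqrt (b (j + D)) < ε / 2 :=
      ht.eventually (gt_mem_nhds (by positivity))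
    obtain ⟨N₁, hN₁⟩ := eventually_atTop.mp hev
    exact ⟨max N₀ N₁, fun j hj =>
      hcore j (le_trans (le_max_left _ _) hj) (hN₁ j (le_trans (le_max_right _ _) hj))⟩
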